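/- The robust Bellman optimality operator L is a γ-contraction with respect to the supremum norm, i.e. ‖L x − L y‖∞ ≤ γ‖x − y‖∞ for all x, y ∈ ℝ^S; consequently the equation L v = v has a unique solution v* ∈ ℝ^S. -/

import Mathlib

/-- The robust Bellman optimality operator `L` is a γ-contraction in
the sup norm, hence `L v = v` has a unique solution. -/
theorem robust_bellman_optimality_operator_contraction
    {S A : Type*} [Fintype S] [Nonempty S] [Fintype A] [Nonempty A]
    (γ : ℝ) (hγ0 : 0 < γ) (hγ1 : γ < 1)
    (r : S → A → S → ℝ)
    (P : S → Set (A → S → ℝ))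
    (hPne : ∀ s, (P s).Nonempty)
    (hPcompact : ∀ s, IsCompact (P s))
    (hPsub : ∀ s, ∀ p ∈ P s, ∀ a, p a ∈ stdSimplex ℝ S)
    (L : (S → ℝ) → (S → ℝ))
    (hL : ∀ v s, L v s =
      sSup ((fun d : A → ℝ =>
        sInf ((fun p : A → S → ℝ =>
          ∑ a, d a * ∑ s', p a s' * (r s a s' + γ * v s')) '' P s)) '' stdSimplex ℝ A)) :
    (∀ x y : S → ℝ, ‖L x - L y‖ ≤ γ * ‖x - y‖) ∧
    (∃! v : S → ℝ, L v = v) := by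
  classical
  -- a point of the simplex on A
  obtain ⟨a₀⟩ := (inferInstance : Nonempty A)
  have hd₀ : (fun a => if a = a₀ then (1:ℝ) else 0) ∈ stdSimplex ℝ A := by
    constructor
    · intro a; by_cases h : a = a₀ <;> simp [h]
    · simp
  -- local abbreviation
  set f : (S → ℝ) → S → (A → ℝ) → (A → S → ℝ) → ℝ :=
    fun v s d p => ∑ a, d a * ∑ s', p a s' * (r s a s' + γ * v s') with hf
  set g : (S → ℝ) → S → (A → ℝ) → ℝ :=
    fun v s d => sInf ((f v s d) '' P s) with hg
  have hfcont : ∀ v s d, Continuous (f v s d) := by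
    intro v s d
    apply continuous_finset_sum
    intro a _
    apply Continuous.mul continuous_const
    apply continuous_finset_sum
    intro s' _
    exact ((continuous_apply s').comp (continuous_apply a : Continuous fun p : A → S → ℝ => p a)).mul continuous_const
  have hbddBelow : ∀ v s d, BddBelow ((f v s d) '' P s) := fun v s d =>
    (((hPcompact s).image (hfcont v s d)).bddBelow)
  have hg_le : ∀ v s d, ∀ p ∈ P s, g v s d ≤ f v s d p := by
    intro v s d p hp
    exact csInf_le (hbddBelow v s d) ⟨p, hp, rfl⟩
  -- key pointwise estimate
  have hkey : ∀ x y : S → ℝ, ∀ s, ∀ d ∈ stdSimplex ℝ A, ∀ p ∈ P s,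
      f x s d p ≤ f y s d p + γ * ‖x - y‖ := by
    intro x y s d hd p hp
    have hdiff : f x s d p - f y s d p
        = ∑ a, d a * ∑ s', p a s' * (γ * (x s' - y s')) := by
      simp only [hf]
      rw [← Finset.sum_sub_distrib]
      apply Finset.sum_congr rfl
      intro a _
      rw [← mul_sub, ← Finset.sum_sub_distrib]
      congr 1
      apply Finset.sum_congr rfl
      intro s' _
      ring
    have hbound : ∑ a, d a * ∑ s', p a s' * (γ * (x s' - y s')) ≤ γ * ‖x - y‖ := by
      have h1 : ∀ a, ∑ s', p a s' * (γ * (x s' - y s')) ≤ γ * ‖x - y‖ := by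
        intro a
        have hpa := hPsub s p hp a
        calc ∑ s', p a s' * (γ * (x s' - y s'))
            ≤ ∑ s', p a s' * (γ * ‖x - y‖) := by
              apply Finset.sum_le_sum
              intro s' _
              apply mul_le_mul_of_nonneg_left _ (hpa.1 s')
              apply mul_le_mul_of_nonneg_left _ hγ0.le
              calc x s' - y s' = (x - y) s' := by simp
                _ ≤ |(x - y) s'| := le_abs_self _
                _ ≤ ‖x - y‖ := by
                    have := norm_le_pi_norm (x - y) s'
                    simpa [Real.norm_eq_abs] using this
          _ = γ * ‖x - y‖ := by rw [← Finset.sum_mul, hpa.2, one_mul]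
      calc ∑ a, d a * ∑ s', p a s' * (γ * (x s' - y s'))
          ≤ ∑ a, d a * (γ * ‖x - y‖) := by
            apply Finset.sum_le_sum
            intro a _
            exact mul_le_mul_of_nonneg_left (h1 a) (hd.1 a)
        _ = γ * ‖x - y‖ := by rw [← Finset.sum_mul, hd.2, one_mul]
    linarith [hdiff ▸ hbound]
  -- g estimate
  have hgkey : ∀ x y : S → ℝ, ∀ s, ∀ d ∈ stdSimplex ℝ A,
      g x s d ≤ g y s d + γ * ‖x - y‖ := by
    intro x y s d hd
    obtain ⟨p₀, hp₀⟩ := hPne s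
    have : g x s d - γ * ‖x - y‖ ≤ g y s d := by
      refine le_csInf ⟨f y s d p₀, ⟨p₀, hp₀, rfl⟩⟩ ?_
      rintro b ⟨p, hp, rfl⟩
      have h1 := hg_le x s d p hp
      have h2 := hkey x y s d hd p hp
      linarith
    linarith
  -- bddAbove for g over the simplex
  have hbddAbove : ∀ v s, BddAbove ((g v s) '' stdSimplex ℝ A) := by
    intro v s
    obtain ⟨p₀, hp₀⟩ := hPne s
    refine ⟨∑ a, |∑ s', p₀ a s' * (r s a s' + γ * v s')|, ?_⟩
    rintro b ⟨d, hd, rfl⟩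
    have hd1 : ∀ a, d a ≤ 1 := by
      intro a
      calc d a ≤ ∑ a', d a' :=
            Finset.single_le_sum (fun i _ => hd.1 i) (Finset.mem_univ a)
        _ = 1 := hd.2
    calc g v s d ≤ f v s d p₀ := hg_le v s d p₀ hp₀
      _ ≤ ∑ a, |∑ s', p₀ a s' * (r s a s' + γ * v s')| := by
          apply Finset.sum_le_sum
          intro a _
          calc d a * ∑ s', p₀ a s' * (r s a s' + γ * v s')
              ≤ |d a * ∑ s', p₀ a s' * (r s a s' + γ * v s')| := le_abs_self _
            _ = d a * |∑ s', p₀ a s' * (r s a s' + γ * v s')| := by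
                rw [abs_mul, abs_of_nonneg (hd.1 a)]
            _ ≤ 1 * |∑ s', p₀ a s' * (r s a s' + γ * v s')| :=
                mul_le_mul_of_nonneg_right (hd1 a) (abs_nonneg _)
            _ = _ := one_mul _
  -- one-sided estimate on L
  have hLkey : ∀ x y : S → ℝ, ∀ s, L x s ≤ L y s + γ * ‖x - y‖ := by
    intro x y s
    rw [hL x s, hL y s]
    refine csSup_le ⟨g x s (fun a => if a = a₀ then (1:ℝ) else 0), ⟨_, hd₀, rfl⟩⟩ ?_
    rintro b ⟨d, hd, rfl⟩
    have h1 := hgkey x y s d hd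
    have h2 : g y s d ≤ sSup ((g y s) '' stdSimplex ℝ A) :=
      le_csSup (hbddAbove y s) ⟨d, hd, rfl⟩
    calc g x s d ≤ g y s d + γ * ‖x - y‖ := h1
      _ ≤ _ := by linarith
  have hcontr : ∀ x y : S → ℝ, ‖L x - L y‖ ≤ γ * ‖x - y‖ := by
    intro x y
    rw [pi_norm_le_iff_of_nonneg (by positivity)]
    intro s
    rw [Real.norm_eq_abs, abs_le]
    constructor
    · have := hLkey y x s
      rw [norm_sub_rev] at this
      simp only [Pi.sub_apply]
      linarith
    · have := hLkey x y s
      simp only [Pi.sub_apply]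
      linarith
  refine ⟨hcontr, ?_⟩
  have hlip : LipschitzWith ⟨γ, hγ0.le⟩ L := by
    apply LipschitzWith.of_dist_le_mul
    intro x y
    rw [dist_eq_norm, dist_eq_norm]; exact hcontr x y
  have hcw : ContractingWith ⟨γ, hγ0.le⟩ L := ⟨by exact_mod_cast hγ1, hlip⟩
  exact ⟨hcw.fixedPoint L, hcw.fixedPoint_isFixedPt, fun v hv => hcw.fixedPoint_unique hv⟩
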